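/- Let m ≥ 1 and k ≥ 1 be integers and let v : Finset (Fin m) → ℝ be normalized (v ∅ = 0), monotone (v A ≤ v B whenever A ⊆ B), and submodular (v A + v B ≥ v (A ∪ B) + v (A ∩ B) for all A, B). Let S : Finset (Fin m) with |S| ≤ k, and let x be the indicator vector of S. Then the expected value of v under the k-draw lottery satisfies G_k^v(x) ≥ (1 − 1/e) · v(S), where e = Real.exp 1. (The k-bounded-lottery rounding scheme is (1−1/e)-approximate for submodular valuations.) -/

import Mathlib

open Finset

/-- Per-draw weights: project `j` is drawn with probability `x j / k`, and
`none` (no project) with the remaining probability `1 - (∑ j, x j)/k`. -/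
noncomputable def lotW {m : ℕ} (k : ℕ) (x : Fin m → ℝ) : Option (Fin m) → ℝ
  | some j => x j / k
  | none => 1 - (∑ j, x j) / k

/-- Probability of a particular draw function `f : Fin t → Option (Fin m)`,
with per-draw weights determined by `k` and `x`. -/
noncomputable def lotP {m : ℕ} (k t : ℕ) (x : Fin m → ℝ)
    (f : Fin t → Option (Fin m)) : ℝ :=
  ∏ s, lotW k x (f s)

/-- The set of projects chosen by a draw function `f`. -/
def lotProj {m t : ℕ} (f : Fin t → Option (Fin m)) : Finset (Fin m) :=
  Finset.univ.filter (fun j => ∃ s, f s = some j)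


/-- Expected value of the set function `v` under the `k`-bounded-lottery
rounding scheme `r_k` applied to `x`. -/
noncomputable def lotG {m : ℕ} (k : ℕ) (v : Finset (Fin m) → ℝ)
    (x : Fin m → ℝ) : ℝ :=
  ∑ f : Fin k → Option (Fin m), lotP k k x f * v (lotProj f)

/-- Submodularity + monotonicity: sum of marginal gains dominates the joint gain. -/
lemma lot_marginal {m : ℕ} (v : Finset (Fin m) → ℝ)
    (hmono : ∀ A B : Finset (Fin m), A ⊆ B → v A ≤ v B)
    (hsub : ∀ A B : Finset (Fin m), v (A ∪ B) + v (A ∩ B) ≤ v A + v B)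
    (A S : Finset (Fin m)) :
    v (A ∪ S) - v A ≤ ∑ j ∈ S, (v (insert j A) - v A) := by
  induction S using Finset.induction with
  | empty => simp
  | insert j S' hj ih =>
    rw [Finset.sum_insert hj]
    have h1 := hsub (insert j A) (A ∪ S')
    have h3 : (insert j A) ∪ (A ∪ S') = A ∪ insert j S' := by
      ext a; simp only [Finset.mem_insert, Finset.mem_union]; tauto
    rw [h3] at h1
    have h2 : v A ≤ v ((insert j A) ∩ (A ∪ S')) := by
      apply hmono
      intro a ha
      simp only [Finset.mem_inter, Finset.mem_insert, Finset.mem_union]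
      tauto
    linarith

lemma lot_sum_succ {m t : ℕ} (F : (Fin (t+1) → Option (Fin m)) → ℝ) :
    ∑ f, F f = ∑ a : Option (Fin m), ∑ g : Fin t → Option (Fin m), F (Fin.cons a g) := by
  rw [← (Fin.consEquiv (fun _ : Fin (t+1) => Option (Fin m))).sum_comp F]
  rw [Fintype.sum_prod_type]
  rfl

lemma lotP_cons {m : ℕ} (k t : ℕ) (x : Fin m → ℝ) (a : Option (Fin m))
    (g : Fin t → Option (Fin m)) :
    lotP k (t+1) x (Fin.cons a g) = lotW k x a * lotP k t x g := by
  simp [lotP, Fin.prod_univ_succ]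

lemma lotProj_cons {m t : ℕ} (a : Option (Fin m)) (g : Fin t → Option (Fin m)) :
    lotProj (Fin.cons a g) = Option.elim a (lotProj g) (fun j => insert j (lotProj g)) := by
  cases a with
  | none =>
    ext j
    simp only [lotProj, Finset.mem_filter, Finset.mem_univ, true_and, Option.elim,
      Fin.exists_fin_succ, Fin.cons_zero, Fin.cons_succ]
    tauto
  | some i =>
    ext j
    simp only [lotProj, Finset.mem_filter, Finset.mem_univ, true_and, Option.elim,
      Fin.exists_fin_succ, Fin.cons_zero, Fin.cons_succ, Finset.mem_insert,
      Option.some_inj]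
    constructor
    · rintro (h | h)
      · exact Or.inl h.symm
      · exact Or.inr h
    · rintro (h | h)
      · exact Or.inl h.symm
      · exact Or.inr h

lemma lotW_sum {m : ℕ} (k : ℕ) (hk : 1 ≤ k) (x : Fin m → ℝ) :
    ∑ a : Option (Fin m), lotW k x a = 1 := by
  rw [Fintype.sum_option]
  have hk0 : (k : ℝ) ≠ 0 := by positivity
  simp only [lotW]
  rw [← Finset.sum_div]
  ring

lemma lotP_sum {m : ℕ} (k : ℕ) (hk : 1 ≤ k) (x : Fin m → ℝ) (t : ℕ) :
    ∑ g : Fin t → Option (Fin m), lotP k t x g = 1 := by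
  induction t with
  | zero => simp [lotP]
  | succ t ih =>
    rw [lot_sum_succ]
    simp only [lotP_cons]
    calc ∑ a : Option (Fin m), ∑ g : Fin t → Option (Fin m), lotW k x a * lotP k t x g
        = ∑ a : Option (Fin m), lotW k x a * ∑ g : Fin t → Option (Fin m), lotP k t x g := by
          simp [Finset.mul_sum]
      _ = 1 := by rw [ih]; simpa using lotW_sum k hk x

theorem stmt4 (m k : ℕ) (hm : 1 ≤ m) (hk : 1 ≤ k) (v : Finset (Fin m) → ℝ)
    (hnorm : v ∅ = 0)
    (hmono : ∀ A B : Finset (Fin m), A ⊆ B → v A ≤ v B)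
    (hsub : ∀ A B : Finset (Fin m), v (A ∪ B) + v (A ∩ B) ≤ v A + v B)
    (S : Finset (Fin m)) (hS : S.card ≤ k) (x : Fin m → ℝ)
    (hx : x = fun j => if j ∈ S then (1 : ℝ) else 0) :
    (1 - 1 / Real.exp 1) * v S ≤ lotG k v x := by
  have hk0 : (0 : ℝ) < (k : ℝ) := by positivity
  have hkR : (1 : ℝ) ≤ (k : ℝ) := by exact_mod_cast hk
  -- sum of x is the cardinality of S
  have hxsum : ∑ j, x j = (S.card : ℝ) := by
    subst hx
    rw [Finset.sum_ite_mem]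
    simp
  -- weights are nonnegative
  have hWnn : ∀ a : Option (Fin m), 0 ≤ lotW k x a := by
    intro a
    cases a with
    | none =>
      simp only [lotW, hxsum]
      have : (S.card : ℝ) ≤ (k : ℝ) := by exact_mod_cast hS
      have := div_le_one_of_le₀ this (le_of_lt hk0)
      linarith
    | some j =>
      simp only [lotW, hx]
      positivity
  have hPnn : ∀ (t : ℕ) (g : Fin t → Option (Fin m)), 0 ≤ lotP k t x g := by
    intro t g
    exact Finset.prod_nonneg fun s _ => hWnn (g s)
  have hvS0 : 0 ≤ v S := by
    have := hmono ∅ S (Finset.empty_subset S)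
    linarith
  -- the key per-draw bound
  have hinner : ∀ A : Finset (Fin m),
      (1 - 1/(k:ℝ)) * v A + (1/(k:ℝ)) * v S ≤
        ∑ a : Option (Fin m), lotW k x a * v (Option.elim a A (fun j => insert j A)) := by
    intro A
    rw [Fintype.sum_option]
    have hsum2 : ∑ j : Fin m, lotW k x (some j) * v (insert j A)
        = ∑ j ∈ S, (1/(k:ℝ)) * v (insert j A) := by
      subst hx
      simp only [lotW]
      have heach : ∀ j : Fin m, (if j ∈ S then (1:ℝ) else 0)/(k:ℝ) * v (insert j A)
          = if j ∈ S then (1/(k:ℝ)) * v (insert j A) else 0 := by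
        intro j; by_cases hj : j ∈ S <;> simp [hj]
      simp only [heach]
      rw [Finset.sum_ite_mem, Finset.univ_inter]
    simp only [Option.elim_none, Option.elim_some]
    rw [hsum2]
    simp only [lotW, hxsum, Option.elim]
    have hmarg := lot_marginal v hmono hsub A S
    have hms : v S ≤ v (A ∪ S) := hmono S (A ∪ S) Finset.subset_union_right
    have hexp : ∑ j ∈ S, (v (insert j A) - v A)
        = (∑ j ∈ S, v (insert j A)) - (S.card : ℝ) * v A := by
      rw [Finset.sum_sub_distrib]
      simp [mul_comm]
    have hexp2 : ∑ j ∈ S, (1/(k:ℝ)) * v (insert j A)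
        = (1/(k:ℝ)) * ∑ j ∈ S, v (insert j A) := by
      rw [Finset.mul_sum]
    rw [hexp2]
    rw [hexp] at hmarg
    have hpos : (0 : ℝ) < 1/(k:ℝ) := by positivity
    have key : v S - v A ≤ (∑ j ∈ S, v (insert j A)) - (S.card : ℝ) * v A := by linarith
    have := mul_le_mul_of_nonneg_left key (le_of_lt hpos)
    have htarget : ((1 - (S.card:ℝ)/(k:ℝ)) * v A + 1/(k:ℝ) * ∑ j ∈ S, v (insert j A))
        - ((1 - 1/(k:ℝ)) * v A + 1/(k:ℝ) * v S)
        = 1/(k:ℝ) * ((∑ j ∈ S, v (insert j A)) - (S.card:ℝ) * v A)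
          - 1/(k:ℝ) * (v S - v A) := by ring
    linarith [this, htarget]
  -- main induction
  have hmain : ∀ t : ℕ,
      v S - (∑ f : Fin t → Option (Fin m), lotP k t x f * v (lotProj f))
        ≤ (1 - 1/(k:ℝ))^t * v S := by
    intro t
    induction t with
    | zero =>
      have h0 : ∀ f : Fin 0 → Option (Fin m), lotProj f = ∅ := by
        intro f; ext j; simp [lotProj]
      simp [lotP, h0, hnorm]
    | succ t ih =>
      have hq0 : (0:ℝ) ≤ 1 - 1/(k:ℝ) := by
        have : 1/(k:ℝ) ≤ 1 := by
          rw [div_le_one hk0]; exact hkR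
        linarith
      have step : (1 - 1/(k:ℝ)) * (∑ f : Fin t → Option (Fin m), lotP k t x f * v (lotProj f))
            + (1/(k:ℝ)) * v S
          ≤ ∑ f : Fin (t+1) → Option (Fin m), lotP k (t+1) x f * v (lotProj f) := by
        rw [lot_sum_succ (fun f => lotP k (t+1) x f * v (lotProj f))]
        simp only [lotP_cons, lotProj_cons]
        rw [Finset.sum_comm]
        have swap : ∀ g : Fin t → Option (Fin m),
            lotP k t x g * ((1 - 1/(k:ℝ)) * v (lotProj g) + (1/(k:ℝ)) * v S)
            ≤ ∑ a : Option (Fin m),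
                lotW k x a * lotP k t x g * v (Option.elim a (lotProj g) (fun j => insert j (lotProj g))) := by
          intro g
          have h1 := hinner (lotProj g)
          calc lotP k t x g * ((1 - 1/(k:ℝ)) * v (lotProj g) + (1/(k:ℝ)) * v S)
              ≤ lotP k t x g * ∑ a : Option (Fin m),
                  lotW k x a * v (Option.elim a (lotProj g) (fun j => insert j (lotProj g))) :=
                mul_le_mul_of_nonneg_left h1 (hPnn t g)
            _ = _ := by rw [Finset.mul_sum]; apply Finset.sum_congr rfl; intro a _; ring
        calc (1 - 1/(k:ℝ)) * (∑ f : Fin t → Option (Fin m), lotP k t x f * v (lotProj f))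
              + (1/(k:ℝ)) * v S
            = ∑ g : Fin t → Option (Fin m),
                lotP k t x g * ((1 - 1/(k:ℝ)) * v (lotProj g) + (1/(k:ℝ)) * v S) := by
              have heq : ∑ g : Fin t → Option (Fin m),
                  lotP k t x g * ((1 - 1/(k:ℝ)) * v (lotProj g) + (1/(k:ℝ)) * v S)
                  = (1 - 1/(k:ℝ)) * (∑ g : Fin t → Option (Fin m), lotP k t x g * v (lotProj g))
                    + (1/(k:ℝ)) * v S * (∑ g : Fin t → Option (Fin m), lotP k t x g) := by
                rw [Finset.mul_sum, Finset.mul_sum, ← Finset.sum_add_distrib]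
                apply Finset.sum_congr rfl; intro g _; ring
              rw [heq, lotP_sum k hk x t]
              ring
          _ ≤ _ := Finset.sum_le_sum fun g _ => swap g
      calc v S - (∑ f : Fin (t+1) → Option (Fin m), lotP k (t+1) x f * v (lotProj f))
          ≤ (1 - 1/(k:ℝ)) * (v S - ∑ f : Fin t → Option (Fin m), lotP k t x f * v (lotProj f)) := by
            linarith [step]
        _ ≤ (1 - 1/(k:ℝ)) * ((1 - 1/(k:ℝ))^t * v S) := mul_le_mul_of_nonneg_left ih hq0
        _ = (1 - 1/(k:ℝ))^(t+1) * v S := by ring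
  -- conclude
  have hek : (1 - 1/(k:ℝ))^k ≤ 1 / Real.exp 1 := by
    have h1 : 1 - 1/(k:ℝ) ≤ Real.exp (-(1/(k:ℝ))) := by
      have := Real.add_one_le_exp (-(1/(k:ℝ)))
      linarith
    have hq0 : (0:ℝ) ≤ 1 - 1/(k:ℝ) := by
      have : 1/(k:ℝ) ≤ 1 := by rw [div_le_one hk0]; exact hkR
      linarith
    calc (1 - 1/(k:ℝ))^k ≤ (Real.exp (-(1/(k:ℝ))))^k := pow_le_pow_left₀ hq0 h1 k
      _ = Real.exp ((k:ℝ) * (-(1/(k:ℝ)))) := (Real.exp_nat_mul _ k).symm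
      _ = Real.exp (-1) := by
          congr 1
          field_simp
      _ = 1 / Real.exp 1 := by rw [Real.exp_neg]; ring
  have := hmain k
  have hfin : (1 - 1/(k:ℝ))^k * v S ≤ (1 / Real.exp 1) * v S :=
    mul_le_mul_of_nonneg_right hek hvS0
  unfold lotG
  linarith
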